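/- In the unit ball 𝔹ⁿ ⊂ ℂⁿ (n ≥ 2), let X' ⊂ 𝔻 be a subset of the unit disc which is not degenerate in 𝔻, and set X := X' × {0} ⊂ 𝔹ⁿ. Then X is a Bloch subset of 𝔹ⁿ (it contains no Kobayashi balls, so R(X) = 0), but X is not degenerate in 𝔹ⁿ. -/

import Mathlib

open Metric Set Filter
open scoped ENNReal NNReal

noncomputable section

/-- The open unit disc in `ℂ`. -/
def uDisc : Set ℂ := Metric.ball 0 1

/-- The inverse hyperbolic tangent. -/
def artanh (x : ℝ) : ℝ := Real.log ((1 + x) / (1 - x)) / 2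

/-- The Poincaré (hyperbolic) distance on the unit disc. -/
def pDist (ζ η : ℂ) : ℝ :=
  artanh ‖(ζ - η) / (1 - (starRingEnd ℂ) ζ * η)‖

/-- Hyperbolic ball in the unit disc. -/
def hBall (z : ℂ) (r : ℝ) : Set ℂ := {w ∈ uDisc | pDist w z < r}

/-- Bloch radius of a subset of the unit disc. -/
def blochRadiusD (U : Set ℂ) : ℝ≥0∞ :=
  ⨆ (r : NNReal) (_ : ∃ z ∈ uDisc, hBall z (r : ℝ) ⊆ U), (r : ℝ≥0∞)

/-- `tanh` extended to `ℝ≥0∞`, with `tanh ∞ = 1`. -/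
def tanhE (x : ℝ≥0∞) : ℝ := if x = ⊤ then 1 else Real.tanh x.toReal

variable {E : Type*} [NormedAddCommGroup E] [NormedSpace ℂ E]

/-- Admissible values for the Lempert function of `D` between `z` and `w`. -/
def lemSet (D : Set E) (z w : E) : Set ℝ :=
  {c | ∃ (f : ℂ → E) (ζ : ℂ), DifferentiableOn ℂ f uDisc ∧ MapsTo f uDisc D ∧
    f 0 = z ∧ ζ ∈ uDisc ∧ f ζ = w ∧ c = pDist 0 ζ}

/-- The Kobayashi (pseudo)distance of `D`, defined via chains of analytic discs. -/
def kDist (D : Set E) (z w : E) : ℝ :=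
  sInf {s | ∃ (m : ℕ) (p : ℕ → E), p 0 = z ∧ p m = w ∧ (∀ i, i ≤ m → p i ∈ D) ∧
      s = ∑ i ∈ Finset.range m, sInf (lemSet D (p i) (p (i + 1)))}

/-- Kobayashi ball of center `z` and radius `r` in `D`. -/
def kBall (D : Set E) (z : E) (r : ℝ) : Set E := {w ∈ D | kDist D w z < r}

/-- Bloch radius of `X ⊆ D` with respect to the Kobayashi distance of `D`. -/
def blochRadius (D X : Set E) : ℝ≥0∞ :=
  ⨆ (r : NNReal) (_ : ∃ z ∈ D, kBall D z (r : ℝ) ⊆ X), (r : ℝ≥0∞)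

/-- The Kobayashi infinitesimal (pseudo)metric of `D`. -/
def kMetric (D : Set E) (z v : E) : ℝ :=
  sInf {c | ∃ (f : ℂ → E) (r : ℝ), DifferentiableOn ℂ f uDisc ∧ MapsTo f uDisc D ∧
    f 0 = z ∧ 0 < r ∧ deriv f 0 = r • v ∧ c = 1 / r}

/-- The hyperbolic Lipschitz constant `μ_D(X)` of `X` inside `D`. -/
def lipConst (D X : Set E) : ℝ :=
  sSup {t | ∃ z ∈ X, ∃ v : E, v ≠ 0 ∧ t = kMetric D z v / kMetric X z v}

/-- `comps f j = f j ∘ ⋯ ∘ f 0`, the iterated function system associated to `f`. -/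
def comps (f : ℕ → E → E) : ℕ → E → E
  | 0 => f 0
  | (j + 1) => f (j + 1) ∘ comps f j

/-- `F` is a limit, in the compact-open topology on `D`, of a subsequence of the
iterated function system associated to `f`. -/
def IFSLimit (D : Set E) (f : ℕ → E → E) (F : E → E) : Prop :=
  ∃ s : ℕ → ℕ, StrictMono s ∧
    TendstoLocallyUniformlyOn (fun j => comps f (s j)) F atTop D

/-- `X ⊆ D` is degenerate in `D`: every limit of every iterated function system of
holomorphic self-maps of `D` with image in `X` is constant. -/
def Degenerate (D X : Set E) : Prop :=
  ∀ f : ℕ → E → E, (∀ j, DifferentiableOn ℂ (f j) D ∧ MapsTo (f j) D X) →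
    ∀ F : E → E, IFSLimit D f F → ∃ c, ∀ z ∈ D, F z = c

/-- A complex geodesic of `D`: a holomorphic isometry from the Poincaré distance of
the unit disc to the Kobayashi distance of `D`. -/
def IsComplexGeodesic (D : Set E) (φ : ℂ → E) : Prop :=
  DifferentiableOn ℂ φ uDisc ∧ MapsTo φ uDisc D ∧
    ∀ ζ ∈ uDisc, ∀ η ∈ uDisc, kDist D (φ ζ) (φ η) = pDist ζ η

/-- A Lempert projection associated to the complex geodesic `φ`: a holomorphic
retraction of `D` onto `φ(𝔻)` with affine fibers. -/
def IsLempertProjection (D : Set E) (φ : ℂ → E) (ρ : E → E) : Prop :=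
  DifferentiableOn ℂ ρ D ∧ MapsTo ρ D (φ '' uDisc) ∧
    (∀ z ∈ D, ρ (ρ z) = ρ z) ∧ (∀ ζ ∈ uDisc, ρ (φ ζ) = φ ζ) ∧
    ∀ ζ ∈ uDisc, ∃ (L : E →ₗ[ℂ] ℂ) (c : ℂ), L ≠ 0 ∧
      {w ∈ D | ρ w = φ ζ} = {w ∈ D | L w = c}

/-- A Lempert projection device `(φ, ρ, ρ̃)`: a complex geodesic, an associated
Lempert projection, and the left inverse `ρ̃ = φ⁻¹ ∘ ρ`. -/
def IsLempertDevice (D : Set E) (φ : ℂ → E) (ρ : E → E) (ρt : E → ℂ) : Prop :=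
  IsComplexGeodesic D φ ∧ IsLempertProjection D φ ρ ∧
    ∀ z ∈ D, ρt z ∈ uDisc ∧ φ (ρt z) = ρ z

/-- `X` is 1-Bloch in `D`: there is `C > 0` such that for every Lempert projection
device, `ρ̃(X)` is contained in a Bloch subdomain of the disc of Bloch radius `< C`. -/
def OneBloch (D X : Set E) : Prop :=
  ∃ C > (0 : ℝ), ∀ (φ : ℂ → E) (ρ : E → E) (ρt : E → ℂ),
    IsLempertDevice D φ ρ ρt → ∃ U : Set ℂ, IsOpen U ∧ IsConnected U ∧ U ⊆ uDisc ∧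
      ρt '' X ⊆ U ∧ blochRadiusD U < ENNReal.ofReal C

/-- `X` is c-Bloch in `D`: there is `C > 0` such that for every Lempert projection
device, `ρ̃(X ∩ φ(𝔻))` is contained in a Bloch subdomain of Bloch radius `≤ C`. -/
def CBloch (D X : Set E) : Prop :=
  ∃ C > (0 : ℝ), ∀ (φ : ℂ → E) (ρ : E → E) (ρt : E → ℂ),
    IsLempertDevice D φ ρ ρt → ∃ U : Set ℂ, IsOpen U ∧ IsConnected U ∧ U ⊆ uDisc ∧
      ρt '' (X ∩ φ '' uDisc) ⊆ U ∧ blochRadiusD U ≤ ENNReal.ofReal C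



/-! ### Auxiliary lemmas -/

lemma mem_uDisc {ζ : ℂ} : ζ ∈ uDisc ↔ ‖ζ‖ < 1 := mem_ball_zero_iff

lemma artanh_nonneg' {x : ℝ} (h0 : 0 ≤ x) (h1 : x < 1) : 0 ≤ artanh x := by
  have hx : (0:ℝ) < 1 - x := by linarith
  have h2 : (1:ℝ) ≤ (1 + x) / (1 - x) := (one_le_div hx).2 (by linarith)
  have h3 := Real.log_nonneg h2
  unfold artanh; linarith

lemma artanh_le_div {x : ℝ} (h0 : 0 ≤ x) (h1 : x < 1) : artanh x ≤ x / (1 - x) := by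
  have hx : (0:ℝ) < 1 - x := by linarith
  have hpos : (0:ℝ) < (1 + x) / (1 - x) := div_pos (by linarith) hx
  have hlog := Real.log_le_sub_one_of_pos hpos
  have heq : (1 + x) / (1 - x) - 1 = 2 * (x / (1 - x)) := by field_simp; ring
  rw [heq] at hlog
  unfold artanh
  linarith

lemma pDist_zero_eq (ζ : ℂ) : pDist 0 ζ = artanh ‖ζ‖ := by
  simp [pDist]

lemma lemSet_nonneg {D : Set E} {z w : E} : ∀ c ∈ lemSet D z w, 0 ≤ c := by
  rintro c ⟨f, ζ, -, -, -, hζ, -, rfl⟩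
  rw [pDist_zero_eq]
  exact artanh_nonneg' (norm_nonneg ζ) (mem_uDisc.1 hζ)

lemma kSet_nonneg (D : Set E) (z w : E) :
    ∀ s ∈ {s | ∃ (m : ℕ) (p : ℕ → E), p 0 = z ∧ p m = w ∧ (∀ i, i ≤ m → p i ∈ D) ∧
      s = ∑ i ∈ Finset.range m, sInf (lemSet D (p i) (p (i + 1)))}, 0 ≤ s := by
  rintro s ⟨mm, p, -, -, -, rfl⟩
  exact Finset.sum_nonneg fun i _ => Real.sInf_nonneg lemSet_nonneg

lemma kDist_self_nonpos {D : Set E} {z : E} (hz : z ∈ D) : kDist D z z ≤ 0 := by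
  unfold kDist
  apply csInf_le ⟨0, fun s hs => kSet_nonneg D z z s hs⟩
  exact ⟨0, fun _ => z, rfl, rfl, fun i _ => hz, by simp⟩

lemma kDist_le_of_disc {D : Set E} {z w : E} (hz : z ∈ D) (hw : w ∈ D)
    (f : ℂ → E) (ζ : ℂ) (hf : DifferentiableOn ℂ f uDisc) (hm : MapsTo f uDisc D)
    (h0 : f 0 = z) (hζ : ζ ∈ uDisc) (h1 : f ζ = w) : kDist D z w ≤ pDist 0 ζ := by
  unfold kDist
  have hmem : sInf (lemSet D z w) ∈ {s | ∃ (m : ℕ) (p : ℕ → E), p 0 = z ∧ p m = w ∧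
      (∀ i, i ≤ m → p i ∈ D) ∧
      s = ∑ i ∈ Finset.range m, sInf (lemSet D (p i) (p (i + 1)))} := by
    refine ⟨1, fun i => if i = 0 then z else w, by simp, by norm_num, ?_, by norm_num⟩
    intro i _
    by_cases h : i = 0 <;> simp [h, hz, hw]
  refine le_trans (csInf_le ⟨0, kSet_nonneg D z w⟩ hmem) ?_
  exact csInf_le ⟨0, lemSet_nonneg⟩ ⟨f, ζ, hf, hm, h0, hζ, h1, rfl⟩

lemma coord_norm_le {n : ℕ} (z : EuclideanSpace ℂ (Fin n)) (i : Fin n) : ‖z i‖ ≤ ‖z‖ := by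
  rw [EuclideanSpace.norm_eq]
  rw [show ‖z i‖ = Real.sqrt (‖z i‖^2) from (Real.sqrt_sq (norm_nonneg _)).symm]
  apply Real.sqrt_le_sqrt
  exact Finset.single_le_sum (f := fun j => ‖z j‖^2) (fun j _ => sq_nonneg _) (Finset.mem_univ i)

lemma uc_comp_tlu {β γ ι α : Type*} [UniformSpace β] [UniformSpace γ] [TopologicalSpace α]
    {F : ι → α → β} {f : α → β} {p : Filter ι} {s : Set α} {g : β → γ}
    (hg : UniformContinuous g) (h : TendstoLocallyUniformlyOn F f p s) :
    TendstoLocallyUniformlyOn (fun n x => g (F n x)) (fun x => g (f x)) p s := by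
  intro u hu x hx
  rcases h _ (hg hu) x hx with ⟨t, ht, H⟩
  exact ⟨t, ht, H.mono fun n hn y hy => hn y hy⟩

/-- in the unit ball of `ℂⁿ`, `n ≥ 2`, the slice `X' × {0}` over a
non-degenerate `X' ⊆ 𝔻` is a Bloch subset (Bloch radius `0`) yet not degenerate. -/
theorem stmt14 {m : ℕ} (X' : Set ℂ) (hX' : X' ⊆ uDisc)
    (hnd : ¬ Degenerate uDisc X') :
    blochRadius (Metric.ball (0 : EuclideanSpace ℂ (Fin (m + 2))) 1)
        {z ∈ Metric.ball (0 : EuclideanSpace ℂ (Fin (m + 2))) 1 |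
          z 0 ∈ X' ∧ ∀ i : Fin (m + 2), i ≠ 0 → z i = 0} = 0 ∧
    ¬ Degenerate (Metric.ball (0 : EuclideanSpace ℂ (Fin (m + 2))) 1)
        {z ∈ Metric.ball (0 : EuclideanSpace ℂ (Fin (m + 2))) 1 |
          z 0 ∈ X' ∧ ∀ i : Fin (m + 2), i ≠ 0 → z i = 0} := by
  set D : Set (EuclideanSpace ℂ (Fin (m + 2))) :=
    Metric.ball (0 : EuclideanSpace ℂ (Fin (m + 2))) 1 with hDdef
  set X : Set (EuclideanSpace ℂ (Fin (m + 2))) :=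
    {z ∈ D | z 0 ∈ X' ∧ ∀ i : Fin (m + 2), i ≠ 0 → z i = 0} with hXdef
  constructor
  · -- Bloch radius is zero
    unfold blochRadius
    rw [ENNReal.iSup_eq_zero]
    intro r
    rw [ENNReal.iSup_eq_zero]
    rintro ⟨z, hz, hsub⟩
    rw [ENNReal.coe_eq_zero]
    by_contra hr
    have hrpos : (0:ℝ) < (r : ℝ) := by positivity
    by_cases h1 : z 1 = (0 : ℂ)
    · -- perturb in direction 1
      have hzn : ‖z‖ < 1 := mem_ball_zero_iff.1 hz
      set δ : ℝ := 1 - ‖z‖ with hδdef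
      have hδ : 0 < δ := by simp [hδdef]; linarith
      set r' : ℝ := min 1 (r : ℝ) with hr'def
      have hr'pos : 0 < r' := lt_min one_pos hrpos
      have hr'le1 : r' ≤ 1 := min_le_left _ _
      have hr'ler : r' ≤ (r : ℝ) := min_le_right _ _
      set t : ℝ := δ / 4 * r' with htdef
      have htpos : 0 < t := by positivity
      have ht4 : t ≤ δ / 4 := by
        calc t = δ / 4 * r' := rfl
        _ ≤ δ / 4 * 1 := by nlinarith
        _ = δ / 4 := mul_one _
      set e₁ : EuclideanSpace ℂ (Fin (m + 2)) :=
        EuclideanSpace.single (1 : Fin (m + 2)) (1 : ℂ) with he₁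
      have he₁n : ‖e₁‖ = 1 := by rw [he₁, EuclideanSpace.norm_single, norm_one]
      set w : EuclideanSpace ℂ (Fin (m + 2)) := z + (t : ℂ) • e₁ with hwdef
      have hw1 : w 1 = (t : ℂ) := by
        rw [hwdef]
        show z 1 + ((t:ℂ) • e₁) 1 = (t:ℂ)
        rw [h1, PiLp.smul_apply, he₁, EuclideanSpace.single_apply]
        simp
      have hwn : ‖w‖ ≤ ‖z‖ + t := by
        calc ‖w‖ ≤ ‖z‖ + ‖(t:ℂ) • e₁‖ := norm_add_le _ _
        _ = ‖z‖ + t := by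
            rw [norm_smul, he₁n, mul_one, Complex.norm_real, Real.norm_of_nonneg htpos.le]
      have hwD : w ∈ D := by
        rw [hDdef, mem_ball_zero_iff]
        have : t < δ := lt_of_le_of_lt ht4 (by linarith)
        calc ‖w‖ ≤ ‖z‖ + t := hwn
        _ < ‖z‖ + δ := by linarith
        _ = 1 := by rw [hδdef]; ring
      set δ' : ℝ := 1 - ‖w‖ with hδ'def
      have hδ'pos : 0 < δ' := by
        have := mem_ball_zero_iff.1 hwD
        simp [hδ'def]; linarith
      have hδ'ge : δ - t ≤ δ' := by
        rw [hδ'def, hδdef]; linarith [hwn]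
      have hδ't : δ / 2 ≤ δ' - t := by linarith [ht4]
      have htδ' : t < δ' := by linarith [ht4, hδ]
      -- the analytic disc from w to z
      set f : ℂ → EuclideanSpace ℂ (Fin (m + 2)) := fun ζ => w - ((δ' : ℂ) * ζ) • e₁ with hfdef
      have hfdiff : DifferentiableOn ℂ f uDisc := by
        apply Differentiable.differentiableOn
        exact (differentiable_const w).sub
          (((differentiable_const ((δ' : ℂ))).mul differentiable_id).smul_const e₁)
      have hfmaps : MapsTo f uDisc D := by
        intro ζ hζ
        rw [hDdef, mem_ball_zero_iff]
        have hζn : ‖ζ‖ < 1 := mem_uDisc.1 hζ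
        calc ‖f ζ‖ ≤ ‖w‖ + ‖((δ' : ℂ) * ζ) • e₁‖ := norm_sub_le _ _
        _ = ‖w‖ + δ' * ‖ζ‖ := by
            rw [norm_smul, he₁n, mul_one, norm_mul, Complex.norm_real,
              Real.norm_of_nonneg hδ'pos.le]
        _ < ‖w‖ + δ' * 1 := by
            have := mul_lt_mul_of_pos_left hζn hδ'pos
            linarith
        _ = 1 := by rw [mul_one, hδ'def]; ring
      have hf0 : f 0 = w := by simp [hfdef]
      set ζ₀ : ℂ := ((t / δ' : ℝ) : ℂ) with hζ₀def
      have hζ₀n : ‖ζ₀‖ = t / δ' := by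
        rw [hζ₀def, Complex.norm_real, Real.norm_of_nonneg (by positivity)]
      have hζ₀mem : ζ₀ ∈ uDisc := by
        rw [mem_uDisc, hζ₀n]
        rw [div_lt_one hδ'pos]
        exact htδ'
      have hfζ₀ : f ζ₀ = z := by
        rw [hfdef]
        show w - ((δ' : ℂ) * ζ₀) • e₁ = z
        have : (δ' : ℂ) * ζ₀ = (t : ℂ) := by
          rw [hζ₀def]
          push_cast
          rw [mul_div_cancel₀]
          exact_mod_cast hδ'pos.ne'
        rw [this, hwdef]
        abel
      have hk : kDist D w z ≤ pDist 0 ζ₀ :=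
        kDist_le_of_disc hwD hz f ζ₀ hfdiff hfmaps hf0 hζ₀mem hfζ₀
      have hkr : kDist D w z < (r : ℝ) := by
        have hx1 : t / δ' < 1 := (div_lt_one hδ'pos).2 htδ'
        have hbound : artanh (t / δ') ≤ t / (δ' - t) := by
          have h := artanh_le_div (x := t / δ') (by positivity) hx1
          have heq : t / δ' / (1 - t / δ') = t / (δ' - t) := by
            have hne : δ' ≠ 0 := hδ'pos.ne'
            have hne2 : δ' - t ≠ 0 := ne_of_gt (by linarith)
            field_simp
          rwa [heq] at h
        have h2 : t / (δ' - t) ≤ t / (δ / 2) := by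
          apply div_le_div_of_nonneg_left htpos.le (by positivity) hδ't
        have h3 : t / (δ / 2) = r' / 2 := by
          rw [htdef]
          field_simp
          ring
        have h4 : r' / 2 < (r : ℝ) := by linarith
        calc kDist D w z ≤ pDist 0 ζ₀ := hk
        _ = artanh (t / δ') := by rw [pDist_zero_eq, hζ₀n]
        _ ≤ t / (δ' - t) := hbound
        _ ≤ t / (δ / 2) := h2
        _ = r' / 2 := h3
        _ < (r : ℝ) := h4
      have hwball : w ∈ kBall D z (r : ℝ) := ⟨hwD, hkr⟩
      have hwX := hsub hwball
      have := hwX.2.2 1 one_ne_zero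
      rw [hw1] at this
      exact htpos.ne' (Complex.ofReal_eq_zero.mp this)
    · -- z itself is in the ball but not in X
      have hzball : z ∈ kBall D z (r : ℝ) :=
        ⟨hz, lt_of_le_of_lt (kDist_self_nonpos hz) hrpos⟩
      exact h1 ((hsub hzball).2.2 1 one_ne_zero)
  · -- not degenerate
    intro hdeg
    apply hnd
    intro g hg G hG
    set f : ℕ → EuclideanSpace ℂ (Fin (m + 2)) → EuclideanSpace ℂ (Fin (m + 2)) :=
      fun j w => EuclideanSpace.single (0 : Fin (m + 2)) (g j (w 0)) with hfdef
    have hπ : ∀ z ∈ D, z 0 ∈ uDisc := by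
      intro z hz
      rw [mem_uDisc]
      exact lt_of_le_of_lt (coord_norm_le z 0) (mem_ball_zero_iff.1 hz)
    have hsingle : ∀ c : ℂ, EuclideanSpace.single (0 : Fin (m + 2)) c =
        c • EuclideanSpace.single (0 : Fin (m + 2)) (1 : ℂ) := by
      intro c
      ext j
      rw [PiLp.smul_apply, EuclideanSpace.single_apply, EuclideanSpace.single_apply]
      by_cases h : j = 0 <;> simp [h]
    have hyp : ∀ j, DifferentiableOn ℂ (f j) D ∧ MapsTo (f j) D X := by
      intro j
      constructor
      · have h1 : DifferentiableOn ℂ (fun w : EuclideanSpace ℂ (Fin (m + 2)) => g j (w 0)) D :=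
          (hg j).1.comp
            ((EuclideanSpace.proj (𝕜 := ℂ) (0 : Fin (m + 2))).differentiable.differentiableOn)
            hπ
        show DifferentiableOn ℂ (fun w : EuclideanSpace ℂ (Fin (m + 2)) =>
            EuclideanSpace.single (0 : Fin (m + 2)) (g j (w 0))) D
        have heq2 : (fun w : EuclideanSpace ℂ (Fin (m + 2)) =>
            EuclideanSpace.single (0 : Fin (m + 2)) (g j (w 0))) =
            fun w => (g j (w 0)) • EuclideanSpace.single (0 : Fin (m + 2)) (1 : ℂ) :=
          funext fun w => hsingle _
        rw [heq2]
        exact h1.smul_const _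
      · intro z hz
        have h0 : g j (z 0) ∈ X' := (hg j).2 (hπ z hz)
        refine ⟨?_, ?_, ?_⟩
        · rw [hDdef, mem_ball_zero_iff]
          show ‖EuclideanSpace.single (0 : Fin (m + 2)) (g j (z 0))‖ < 1
          rw [EuclideanSpace.norm_single]
          exact mem_ball_zero_iff.1 (hX' h0)
        · show (EuclideanSpace.single (0 : Fin (m + 2)) (g j (z 0))) 0 ∈ X'
          simpa [EuclideanSpace.single_apply] using h0
        · intro i hi
          show (EuclideanSpace.single (0 : Fin (m + 2)) (g j (z 0))) i = 0
          simp [EuclideanSpace.single_apply, hi]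
    have hcomp : ∀ j, comps f j =
        fun z => EuclideanSpace.single (0 : Fin (m + 2)) (comps g j (z 0)) := by
      intro j
      induction j with
      | zero => rfl
      | succ j ih =>
        funext z; simp only [comps, Function.comp_apply, ih]; simp [hfdef, EuclideanSpace.single_apply]
    obtain ⟨s, hsm, hT⟩ := hG
    set F : EuclideanSpace ℂ (Fin (m + 2)) → EuclideanSpace ℂ (Fin (m + 2)) :=
      fun z => EuclideanSpace.single (0 : Fin (m + 2)) (G (z 0)) with hFdef
    have hiso : Isometry (fun c : ℂ => EuclideanSpace.single (0 : Fin (m + 2)) c) :=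
      Isometry.of_dist_eq fun a b => EuclideanSpace.dist_single_same _ _ _
    have hFlim : IFSLimit D f F := by
      refine ⟨s, hsm, ?_⟩
      have step1 := hT.comp (fun z : EuclideanSpace ℂ (Fin (m + 2)) => z 0) hπ
        ((EuclideanSpace.proj (𝕜 := ℂ) (0 : Fin (m + 2))).continuous.continuousOn)
      have step2 := uc_comp_tlu hiso.uniformContinuous step1
      have heq : (fun j => comps f (s j)) =
          fun j (z : EuclideanSpace ℂ (Fin (m + 2))) =>
            EuclideanSpace.single (0 : Fin (m + 2)) (comps g (s j) (z 0)) :=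
        funext fun j => hcomp (s j)
      rw [heq]
      exact step2
    obtain ⟨c, hc⟩ := hdeg f hyp F hFlim
    refine ⟨c 0, fun ζ hζ => ?_⟩
    have hzD : EuclideanSpace.single (0 : Fin (m + 2)) ζ ∈ D := by
      rw [hDdef, mem_ball_zero_iff, EuclideanSpace.norm_single]
      exact mem_uDisc.1 hζ
    have hFv := hc _ hzD
    have h00 : (EuclideanSpace.single (0 : Fin (m + 2)) ζ) 0 = ζ := by
      simp [EuclideanSpace.single_apply]
    rw [hFdef] at hFv
    simp only [h00] at hFv
    have := congrArg (fun v : EuclideanSpace ℂ (Fin (m + 2)) => v 0) hFv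
    simpa [EuclideanSpace.single_apply] using this
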